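/- Let c be an acyclic partial edge coloring of G with edge e = ab uncolored, and let β be a candidate color for e. Then β is not valid for e (assigning β to e creates a bichromatic cycle) if and only if there exists a color α ∈ S_{ab} ∩ S_{ba} such that G contains an (α,β,ab)-critical path with respect to c. -/

import Mathlib

open SimpleGraph

/-- Property A: every induced subgraph `H` satisfies `|E(H)| ≤ 2|V(H)| - 1`. -/
def PropertyA {V : Type*} (G : SimpleGraph V) : Prop :=
  ∀ s : Set V, (G.induce s).edgeSet.ncard ≤ 2 * s.ncard - 1

/-- `H` is a minor of `G`: branch sets are disjoint, connected, and adjacency is represented. -/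
def IsMinor {W V : Type*} (H : SimpleGraph W) (G : SimpleGraph V) : Prop :=
  ∃ f : W → Set V,
    (∀ w, (G.induce (f w)).Connected) ∧
    (∀ w₁ w₂, w₁ ≠ w₂ → Disjoint (f w₁) (f w₂)) ∧
    (∀ w₁ w₂, H.Adj w₁ w₂ → ∃ a ∈ f w₁, ∃ b ∈ f w₂, G.Adj a b)

/-- Planarity via Wagner's theorem: no `K₅` minor and no `K₃,₃` minor. -/
def IsPlanar {V : Type*} (G : SimpleGraph V) : Prop :=
  ¬ IsMinor (completeGraph (Fin 5)) G ∧
  ¬ IsMinor (completeBipartiteGraph (Fin 3) (Fin 3)) G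

/-- A proper edge coloring: distinct edges sharing a vertex get distinct colors. -/
def IsProperEdgeColoring {V β : Type*} (G : SimpleGraph V) (c : Sym2 V → β) : Prop :=
  ∀ e ∈ G.edgeSet, ∀ f ∈ G.edgeSet, e ≠ f → (∃ v, v ∈ e ∧ v ∈ f) → c e ≠ c f

/-- An acyclic edge coloring: proper and no cycle uses only two colors. -/
def IsAcyclicEdgeColoring {V β : Type*} (G : SimpleGraph V) (c : Sym2 V → β) : Prop :=
  IsProperEdgeColoring G c ∧
    ∀ (γ δ : β) (v : V) (p : G.Walk v v), p.IsCycle →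
      ¬ ∀ e ∈ p.edges, c e = γ ∨ c e = δ

/-- `G` admits an acyclic edge coloring with at most `k` colors. -/
def AcyclicallyEdgeColorable {V : Type*} (G : SimpleGraph V) (k : ℕ) : Prop :=
  ∃ c : Sym2 V → Fin k, IsAcyclicEdgeColoring G c

/-- A proper partial edge coloring (uncolored edges get `none`). -/
def IsProperPartialEdgeColoring {V : Type*} (G : SimpleGraph V) (c : Sym2 V → Option ℕ) : Prop :=
  ∀ e ∈ G.edgeSet, ∀ f ∈ G.edgeSet, e ≠ f → (∃ v, v ∈ e ∧ v ∈ f) →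
    ∀ γ : ℕ, c e = some γ → c f ≠ some γ

/-- There is a cycle all of whose edges are colored with one of two colors. -/
def HasBichromaticCycle {V : Type*} (G : SimpleGraph V) (c : Sym2 V → Option ℕ) : Prop :=
  ∃ (γ δ : ℕ) (v : V) (p : G.Walk v v), p.IsCycle ∧
    ∀ e ∈ p.edges, c e = some γ ∨ c e = some δ

/-- A valid (acyclic proper) partial edge coloring. -/
def IsAcyclicPartialEdgeColoring {V : Type*} (G : SimpleGraph V) (c : Sym2 V → Option ℕ) : Prop :=
  IsProperPartialEdgeColoring G c ∧ ¬ HasBichromaticCycle G c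

/-- `F_a`: the set of colors appearing on edges incident to `a`. -/
def colorsAt {V : Type*} (G : SimpleGraph V) (c : Sym2 V → Option ℕ) (a : V) : Set ℕ :=
  {γ | ∃ z, G.Adj a z ∧ c s(a, z) = some γ}

/-- `S_{ab} = F_b \ {c(a,b)}`. -/
def Sset {V : Type*} (G : SimpleGraph V) (c : Sym2 V → Option ℕ) (a b : V) : Set ℕ :=
  colorsAt G c b \ {γ | c s(a, b) = some γ}

/-- A maximal `(γ,δ)`-bichromatic path: a path all of whose edges are colored `γ` or `δ`,
which cannot be extended at either end by a `γ`- or `δ`-colored edge. -/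
def IsMaxBichromaticPath {V : Type*} (G : SimpleGraph V) (c : Sym2 V → Option ℕ)
    (γ δ : ℕ) {x y : V} (p : G.Walk x y) : Prop :=
  p.IsPath ∧ (∀ e ∈ p.edges, c e = some γ ∨ c e = some δ) ∧
    ∀ e ∈ G.edgeSet, (x ∈ e ∨ y ∈ e) → (c e = some γ ∨ c e = some δ) → e ∈ p.edges

/-- A `(γ,δ,ab)`-critical path: a maximal `(γ,δ)`-bichromatic path from `a` to `b`
whose first and last edges are colored `γ`. -/
def IsCriticalPath {V : Type*} (G : SimpleGraph V) (c : Sym2 V → Option ℕ)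
    (γ δ : ℕ) (a b : V) (p : G.Walk a b) : Prop :=
  IsMaxBichromaticPath G c γ δ p ∧
    (∃ e, p.edges.head? = some e ∧ c e = some γ) ∧
    (∃ e, p.edges.getLast? = some e ∧ c e = some γ)

private lemma AEC7_support_dropLast {V : Type*} {G : SimpleGraph V} {u v : V} (p : G.Walk u v) :
    p.support.dropLast ++ [v] = p.support := by
  induction p with
  | nil => simp
  | cons h q ih =>
    rw [Walk.support_cons, List.dropLast_cons_of_ne_nil (Walk.support_ne_nil _), List.cons_append,
      ih]

private lemma AEC7_isCycle_reverse {V : Type*} {G : SimpleGraph V} {u : V} {p : G.Walk u u}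
    (h : p.IsCycle) : p.reverse.IsCycle := by
  have htail : p.support.tail ≠ [] := by
    intro hnil
    have h3 := h.three_le_length
    have hl : p.support.length = p.length + 1 := p.length_support
    rw [p.support_eq_cons, hnil] at hl
    simp only [List.length_cons, List.length_nil] at hl
    omega
  have h1 : p.support.tail.Nodup := h.support_nodup
  have h2 : p.support.tail.dropLast ++ [u] = p.support.tail := by
    have hd := AEC7_support_dropLast p
    rw [p.support_eq_cons, List.dropLast_cons_of_ne_nil htail, List.cons_append] at hd
    exact (List.cons.injEq _ _ _ _ ▸ hd).2
  refine ⟨⟨Walk.IsTrail.reverse _ h.isTrail, ?_⟩, ?_⟩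
  · intro hn
    apply h.ne_nil
    have := congrArg Walk.reverse hn
    simpa using this
  · rw [Walk.support_reverse, List.tail_reverse, List.nodup_reverse, p.support_eq_cons,
      List.dropLast_cons_of_ne_nil htail, List.nodup_cons]
    constructor
    · intro hmem
      rw [← h2] at h1
      exact (List.disjoint_of_nodup_append h1) hmem (by simp)
    · exact h1.sublist (List.dropLast_sublist _)

private lemma AEC7_mem_support_of_mem_edges {V : Type*} {G : SimpleGraph V} {u v x : V}
    (p : G.Walk u v) (e : Sym2 V) (he : e ∈ p.edges) (hx : x ∈ e) : x ∈ p.support := by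
  revert he hx
  induction e using Sym2.ind with
  | _ y z =>
    intro he hx
    rcases Sym2.mem_iff.mp hx with rfl | rfl
    · exact p.fst_mem_support_of_mem_edges he
    · exact p.snd_mem_support_of_mem_edges he

private lemma AEC7_head_edge {V : Type*} {G : SimpleGraph V} {u v : V} (p : G.Walk u v) :
    p.IsPath → ∀ e ∈ p.edges, u ∈ e → p.edges.head? = some e := by
  induction p with
  | nil => intro _ e he; simp at he
  | cons h q ih =>
    intro hp e he hu
    rw [Walk.edges_cons] at he ⊢
    rcases List.mem_cons.mp he with rfl | he'
    · rfl
    · exfalso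
      exact ((Walk.cons_isPath_iff _ _).mp hp).2 (AEC7_mem_support_of_mem_edges q e he' hu)

private lemma AEC7_last_edge {V : Type*} {G : SimpleGraph V} {u v : V} (p : G.Walk u v)
    (hp : p.IsPath) (e : Sym2 V) (he : e ∈ p.edges) (hv : v ∈ e) :
    p.edges.getLast? = some e := by
  have := AEC7_head_edge p.reverse hp.reverse e (by rwa [Walk.edges_reverse, List.mem_reverse]) hv
  rwa [Walk.edges_reverse, List.head?_reverse] at this

private lemma AEC7_first_edge_exists {V : Type*} {G : SimpleGraph V} {u v : V} (p : G.Walk u v)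
    (hne : u ≠ v) : ∃ x, p.edges.head? = some s(u, x) ∧ G.Adj u x := by
  cases p with
  | nil => exact absurd rfl hne
  | cons h q => exact ⟨_, rfl, h⟩


/-- a candidate color `β` for the uncolored edge `ab` is not valid iff
there is a color `α ∈ S_{ab} ∩ S_{ba}` with an `(α,β,ab)`-critical path. -/
theorem not_valid_iff_critical_path {V : Type*} [DecidableEq V] (G : SimpleGraph V)
    (c : Sym2 V → Option ℕ) (a b : V) (hab : G.Adj a b)
    (hc : IsAcyclicPartialEdgeColoring G c) (hun : c s(a, b) = none)
    (β : ℕ) (hcand : β ∉ colorsAt G c a ∪ colorsAt G c b) :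
    ¬ IsAcyclicPartialEdgeColoring G (Function.update c s(a, b) (some β)) ↔
      ∃ α ∈ Sset G c a b ∩ Sset G c b a,
        ∃ p : G.Walk a b, IsCriticalPath G c α β a b p := by
  set c' := Function.update c s(a, b) (some β) with hc'
  have hne : a ≠ b := hab.ne
  have hupdself : c' s(a, b) = some β := Function.update_self _ _ _
  have hupdne : ∀ e, e ≠ s(a, b) → c' e = c e := fun e h => Function.update_of_ne h _ _
  have hnoβ : ∀ e ∈ G.edgeSet, (a ∈ e ∨ b ∈ e) → c e ≠ some β := by
    intro e
    induction e using Sym2.ind with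
    | _ x y =>
      intro hE hm hce
      rw [SimpleGraph.mem_edgeSet] at hE
      apply hcand
      rw [Set.mem_union]
      rcases hm with hm | hm <;> rcases Sym2.mem_iff.mp hm with rfl | rfl
      · exact Or.inl ⟨y, hE, hce⟩
      · exact Or.inl ⟨x, hE.symm, by rwa [Sym2.eq_swap] at hce⟩
      · exact Or.inr ⟨y, hE, hce⟩
      · exact Or.inr ⟨x, hE.symm, by rwa [Sym2.eq_swap] at hce⟩
  have hproper' : IsProperPartialEdgeColoring G c' := by
    intro e heE f hfE hef hshare γ' hce hcf
    obtain ⟨v, hv1, hv2⟩ := hshare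
    by_cases he1 : e = s(a, b)
    · subst he1
      rw [hupdself, Option.some.injEq] at hce
      subst hce
      rw [hupdne f (fun h => hef h.symm)] at hcf
      refine hnoβ f hfE ?_ hcf
      rcases Sym2.mem_iff.mp hv1 with rfl | rfl
      · exact Or.inl hv2
      · exact Or.inr hv2
    · by_cases hf1 : f = s(a, b)
      · subst hf1
        rw [hupdself, Option.some.injEq] at hcf
        subst hcf
        rw [hupdne e he1] at hce
        refine hnoβ e heE ?_ hce
        rcases Sym2.mem_iff.mp hv2 with rfl | rfl
        · exact Or.inl hv1
        · exact Or.inr hv1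
      · rw [hupdne e he1] at hce
        rw [hupdne f hf1] at hcf
        exact hc.1 e heE f hfE hef ⟨v, hv1, hv2⟩ γ' hce hcf
  constructor
  · -- forward
    intro hna
    have hbc : HasBichromaticCycle G c' := by
      by_contra hno
      exact hna ⟨hproper', hno⟩
    obtain ⟨γ, δ, v, q, hcyc, hcol⟩ := hbc
    have hein : s(a, b) ∈ q.edges := by
      by_contra hni
      exact hc.2 ⟨γ, δ, v, q, hcyc, fun e he => by
        rw [← hupdne e (by rintro rfl; exact hni he)]; exact hcol e he⟩
    have hav : a ∈ q.support := q.fst_mem_support_of_mem_edges hein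
    -- key claim
    have key : ∀ Q : G.Walk a a, Q.IsCycle → (∀ e ∈ Q.edges, c' e = some γ ∨ c' e = some δ) →
        Q.edges.head? = some s(a, b) →
        ∃ α ∈ Sset G c a b ∩ Sset G c b a,
          ∃ p : G.Walk a b, IsCriticalPath G c α β a b p := by
      intro Q hQc hQcol hQh
      cases Q with
      | nil => simp at hQh
      | @cons _ x _ h r =>
        rw [Walk.edges_cons, List.head?_cons, Option.some.injEq] at hQh
        have hxb : b = x := (Sym2.congr_right.mp hQh).symm
        subst hxb
        obtain ⟨hr_path, hnotin⟩ := (Walk.cons_isCycle_iff r h).mp hQc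
        set p := r.reverse with hpdef
        have hp_path : p.IsPath := hr_path.reverse
        have hpe : p.edges = r.edges.reverse := Walk.edges_reverse r
        have hmem : ∀ e, e ∈ p.edges ↔ e ∈ r.edges := by simp [hpe]
        have hnotin' : s(a, b) ∉ p.edges := fun hh => hnotin ((hmem _).mp hh)
        have hcolp : ∀ e ∈ p.edges, c e = some γ ∨ c e = some δ := by
          intro e he
          have he2 : e ∈ (Walk.cons h r).edges := by
            rw [Walk.edges_cons]
            exact List.mem_cons_of_mem _ ((hmem e).mp he)
          have hene : e ≠ s(a, b) := fun hh => hnotin' (hh ▸ he)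
          rw [← hupdne e hene]
          exact hQcol e he2
        obtain ⟨x₀, hx₀head, hx₀adj⟩ := AEC7_first_edge_exists p hne
        have hx₀mem : s(a, x₀) ∈ p.edges := by
          have := List.mem_of_mem_head? (l := p.edges) (a := s(a, x₀))
          exact this (by rw [hx₀head]; rfl)
        have hx₀neβ : c s(a, x₀) ≠ some β :=
          hnoβ _ (G.mem_edgeSet.mpr hx₀adj) (Or.inl (Sym2.mem_iff.mpr (Or.inl rfl)))
        obtain ⟨y₀, hy₀headr, hy₀adj⟩ := AEC7_first_edge_exists r hne.symm
        have hy₀memr : s(b, y₀) ∈ r.edges := by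
          have := List.mem_of_mem_head? (l := r.edges) (a := s(b, y₀))
          exact this (by rw [hy₀headr]; rfl)
        have hy₀mem : s(b, y₀) ∈ p.edges := (hmem _).mpr hy₀memr
        have hlastEq : p.edges.getLast? = some s(b, y₀) := by
          rw [hpe, List.getLast?_reverse]
          exact hy₀headr
        have hy₀neβ : c s(b, y₀) ≠ some β :=
          hnoβ _ (G.mem_edgeSet.mpr hy₀adj) (Or.inr (Sym2.mem_iff.mpr (Or.inl rfl)))
        have hβgd : β = γ ∨ β = δ := by
          have := hQcol s(a, b) (by rw [Walk.edges_cons]; exact List.mem_cons_self)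
          rw [hupdself] at this
          rcases this with h1 | h1
          · exact Or.inl (Option.some.inj h1)
          · exact Or.inr (Option.some.inj h1)
        obtain ⟨α, hαfst, hcolαβ⟩ :
            ∃ α, c s(a, x₀) = some α ∧ ∀ e ∈ p.edges, c e = some α ∨ c e = some β := by
          rcases hcolp _ hx₀mem with h1 | h1
          · refine ⟨γ, h1, ?_⟩
            have hβδ : β = δ := by
              rcases hβgd with rfl | rfl
              · exact absurd h1 hx₀neβ
              · rfl
            intro e he
            rcases hcolp e he with h2 | h2
            · exact Or.inl h2
            · exact Or.inr (by rw [hβδ]; exact h2)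
          · refine ⟨δ, h1, ?_⟩
            have hβγ : β = γ := by
              rcases hβgd with rfl | rfl
              · rfl
              · exact absurd h1 hx₀neβ
            intro e he
            rcases hcolp e he with h2 | h2
            · exact Or.inr (by rw [hβγ]; exact h2)
            · exact Or.inl h2
        have hαlast : c s(b, y₀) = some α := (hcolαβ _ hy₀mem).resolve_right hy₀neβ
        refine ⟨α, ⟨⟨⟨y₀, hy₀adj, hαlast⟩, ?_⟩, ⟨⟨x₀, hx₀adj, hαfst⟩, ?_⟩⟩,
          p, ⟨hp_path, hcolαβ, ?_⟩, ⟨s(a, x₀), hx₀head, hαfst⟩, ⟨s(b, y₀), hlastEq, hαlast⟩⟩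
        · simp only [Set.mem_setOf_eq, hun]
          simp
        · rw [Set.mem_setOf_eq, Sym2.eq_swap, hun]
          simp
        · -- maximality
          intro e heE hm hcol2
          rcases hcol2 with hce | hce
          · rcases hm with hm | hm
            · by_cases hee : e = s(a, x₀)
              · exact hee ▸ hx₀mem
              · exact absurd hαfst
                  (hc.1 e heE s(a, x₀) (G.mem_edgeSet.mpr hx₀adj) hee
                    ⟨a, hm, Sym2.mem_iff.mpr (Or.inl rfl)⟩ α hce)
            · by_cases hee : e = s(b, y₀)
              · exact hee ▸ hy₀mem
              · exact absurd hαlast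
                  (hc.1 e heE s(b, y₀) (G.mem_edgeSet.mpr hy₀adj) hee
                    ⟨b, hm, Sym2.mem_iff.mpr (Or.inl rfl)⟩ α hce)
          · exact absurd hce (hnoβ e heE hm)
    -- produce a cycle at a whose FIRST edge is s(a,b)
    obtain ⟨Q, hQc, hQcol, hQe⟩ :
        ∃ Q : G.Walk a a, Q.IsCycle ∧ (∀ e ∈ Q.edges, c' e = some γ ∨ c' e = some δ) ∧
          s(a, b) ∈ Q.edges :=
      ⟨q.rotate a hav, hcyc.rotate hav,
        fun e he => hcol e ((q.rotate_edges a hav).mem_iff.mp he),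
        (q.rotate_edges a hav).mem_iff.mpr hein⟩
    cases Q with
    | nil => exact absurd rfl hQc.ne_nil
    | @cons _ x _ h r =>
      obtain ⟨hr_path, hfe_notin⟩ := (Walk.cons_isCycle_iff r h).mp hQc
      rw [Walk.edges_cons] at hQe
      rcases List.mem_cons.mp hQe with heq | hin
      · exact key (Walk.cons h r) hQc hQcol
          (by rw [Walk.edges_cons, List.head?_cons, heq])
      · have hlast : r.edges.getLast? = some s(a, b) :=
          AEC7_last_edge r hr_path _ hin (Sym2.mem_iff.mpr (Or.inl rfl))
        refine key (Walk.cons h r).reverse (AEC7_isCycle_reverse hQc) ?_ ?_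
        · intro e he
          rw [Walk.edges_reverse, List.mem_reverse] at he
          exact hQcol e he
        · rw [Walk.edges_reverse, List.head?_reverse, Walk.edges_cons]
          cases hE : r.edges with
          | nil => exact absurd (hE ▸ hin) List.not_mem_nil
          | cons e0 l0 =>
            rw [hE] at hlast
            rw [List.getLast?_cons_cons, hlast]
  · -- backward
    rintro ⟨α, ⟨hSab, hSba⟩, p, ⟨⟨hp_path, hp_col, _hmax⟩, hfst, hlst⟩⟩ hacy'
    apply hacy'.2
    have hnotin : s(a, b) ∉ p.edges := by
      intro hh
      rcases hp_col _ hh with h' | h' <;> rw [hun] at h' <;> exact nomatch h'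
    refine ⟨α, β, a, Walk.cons hab p.reverse, ?_, ?_⟩
    · exact (Walk.cons_isCycle_iff p.reverse hab).mpr
        ⟨hp_path.reverse, by rw [Walk.edges_reverse, List.mem_reverse]; exact hnotin⟩
    · intro e he
      rw [Walk.edges_cons] at he
      rcases List.mem_cons.mp he with rfl | he'
      · exact Or.inr hupdself
      · have hep : e ∈ p.edges := by rwa [Walk.edges_reverse, List.mem_reverse] at he'
        have hne' : e ≠ s(a, b) := fun hh => hnotin (hh ▸ hep)
        rw [hupdne e hne']
        exact hp_col e hep
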